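/- Fix λ ∈ (0,1) and ρ ∈ (0,1) with λ ≤ ρ. Define f(s, q) = (1/2)·log((2πe)²s²) − ((1+λ)/2)·log((2πe)²s²(1−q²)) for s > 0, q ∈ (−1,1). Then for all s > 0 and q ∈ (−1,1) with s(1−q) ≤ 1−ρ (and q ≤ ρ), one has f(s, q) ≥ f((1−ρ)/(1−λ), λ) = (1/2)·log(1/(1−λ²)) − (λ/2)·log((2πe)²(1−ρ)²(1+λ)/(1−λ)). -/
import Mathlib
set_option maxHeartbeats 1000000


open Real

noncomputable def f9 (lam s q : ℝ) : ℝ :=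
  (1/2) * Real.log ((2*π*Real.exp 1)^2 * s^2)
    - ((1+lam)/2) * Real.log ((2*π*Real.exp 1)^2 * s^2 * (1 - q^2))

lemma f9_expand (lam s q : ℝ) (hs : 0 < s) (hq : 0 < 1 - q^2) :
    f9 lam s q = -(lam/2)*Real.log ((2*π*Real.exp 1)^2) - lam*Real.log s
      - ((1+lam)/2)*Real.log (1-q^2) := by
  have hc : (0:ℝ) < (2*π*Real.exp 1)^2 := by positivity
  unfold f9
  rw [Real.log_mul (by positivity) hq.ne', Real.log_mul hc.ne' (by positivity),
    Real.log_pow, Real.log_pow]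
  push_cast
  ring

theorem stmt_9 (lam ρ : ℝ) (hlam : lam ∈ Set.Ioo (0:ℝ) 1) (hρ : ρ ∈ Set.Ioo (0:ℝ) 1)
    (hlr : lam ≤ ρ) :
    (∀ s q : ℝ, 0 < s → q ∈ Set.Ioo (-1:ℝ) 1 → s*(1-q) ≤ 1-ρ → q ≤ ρ →
      f9 lam s q ≥ f9 lam ((1-ρ)/(1-lam)) lam) ∧
    f9 lam ((1-ρ)/(1-lam)) lam
      = (1/2) * Real.log (1/(1-lam^2))
        - (lam/2) * Real.log ((2*π*Real.exp 1)^2 * (1-ρ)^2 * (1+lam)/(1-lam)) := by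
  obtain ⟨hl0, hl1⟩ := hlam
  obtain ⟨hρ0, hρ1⟩ := hρ
  have hc : (0:ℝ) < (2*π*Real.exp 1)^2 := by positivity
  have h1l : 0 < 1 - lam := by linarith
  have h1l' : 0 < 1 + lam := by linarith
  have h1ρ : 0 < 1 - ρ := by linarith
  have hs0 : 0 < (1-ρ)/(1-lam) := by positivity
  have hlam2 : 0 < 1 - lam^2 := by nlinarith
  have hs0log : Real.log ((1-ρ)/(1-lam)) = Real.log (1-ρ) - Real.log (1-lam) :=
    Real.log_div h1ρ.ne' h1l.ne'
  have hlamlog : Real.log (1-lam^2) = Real.log (1-lam) + Real.log (1+lam) := by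
    rw [show (1:ℝ) - lam^2 = (1-lam)*(1+lam) by ring, Real.log_mul h1l.ne' h1l'.ne']
  constructor
  · rintro s q hs ⟨hq1, hq2⟩ hcon hqρ
    have h1q : 0 < 1 - q := by linarith
    have h1q' : 0 < 1 + q := by linarith
    have hq2' : 0 < 1 - q^2 := by nlinarith
    rw [ge_iff_le, f9_expand lam s q hs hq2', f9_expand lam _ lam hs0 hlam2]
    have hqlog : Real.log (1-q^2) = Real.log (1-q) + Real.log (1+q) := by
      rw [show (1:ℝ) - q^2 = (1-q)*(1+q) by ring, Real.log_mul h1q.ne' h1q'.ne']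
    -- log s ≤ log(1-ρ) - log(1-q)
    have hsle : s ≤ (1-ρ)/(1-q) := by
      rw [le_div_iff₀ h1q]; linarith
    have h1 : Real.log s ≤ Real.log (1-ρ) - Real.log (1-q) := by
      calc Real.log s ≤ Real.log ((1-ρ)/(1-q)) := Real.log_le_log hs hsle
        _ = _ := Real.log_div h1ρ.ne' h1q.ne'
    have h1' : lam * Real.log s ≤ lam * (Real.log (1-ρ) - Real.log (1-q)) :=
      mul_le_mul_of_nonneg_left h1 hl0.le
    -- (1-lam)*(log(1-q) - log(1-lam)) ≤ lam - q
    have ha := Real.log_le_sub_one_of_pos (show (0:ℝ) < (1-q)/(1-lam) by positivity)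
    rw [Real.log_div h1q.ne' h1l.ne'] at ha
    have hacanc : (1-lam) * ((1-q)/(1-lam)) = 1-q := by field_simp
    have h5 : (1-lam) * (Real.log (1-q) - Real.log (1-lam)) ≤ lam - q := by
      nlinarith [mul_le_mul_of_nonneg_left ha h1l.le]
    have hb := Real.log_le_sub_one_of_pos (show (0:ℝ) < (1+q)/(1+lam) by positivity)
    rw [Real.log_div h1q'.ne' h1l'.ne'] at hb
    have hbcanc : (1+lam) * ((1+q)/(1+lam)) = 1+q := by field_simp
    have h6 : (1+lam) * (Real.log (1+q) - Real.log (1+lam)) ≤ q - lam := by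
      nlinarith [mul_le_mul_of_nonneg_left hb h1l'.le]
    rw [hs0log, hqlog, hlamlog]
    nlinarith [h1', h5, h6]
  · have harg : (2*π*Real.exp 1)^2 * (1-ρ)^2 * (1+lam)/(1-lam)
        = (2*π*Real.exp 1)^2 * ((1-ρ)/(1-lam))^2 * (1-lam^2) := by
      field_simp
      ring
    rw [f9_expand lam _ lam hs0 hlam2, harg, Real.log_div one_ne_zero hlam2.ne', Real.log_one,
      Real.log_mul (by positivity) hlam2.ne', Real.log_mul hc.ne' (by positivity),
      Real.log_pow, Real.log_pow]
    push_cast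
    ring
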